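/- Define f: ℚ⁺ → ℝ⁺ by f(p/q) = 1/q for p,q coprime positive integers, and h(x) = 1/x on ℝ⁺. Then β(f) = 2 (f has oscillation rank 2), while h ∘ f is not fragmented (β(h ∘ f) = ∞), even though h is continuous. -/

import Mathlib

open Set Filter Ordinal ENNReal

universe u v

section Defs

variable {X : Type u} {E : Type v}

/-- `f` restricted to `A` is `ε`-fragmented: every nonempty subset of `A` has a relatively
open nonempty piece on which the oscillation (diameter of the image) of `f` is at most `ε`. -/
def EpsFragOn [TopologicalSpace X] [PseudoEMetricSpace E] (f : X → E) (A : Set X)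
    (ε : ℝ≥0∞) : Prop :=
  ∀ F : Set X, F ⊆ A → F.Nonempty → ∃ V : Set X, IsOpen V ∧ (V ∩ F).Nonempty ∧
    EMetric.diam (f '' (V ∩ F)) ≤ ε

/-- The fragmentability index `frag f = inf {ε > 0 : f is ε-fragmented}` (with `inf ∅ = ∞`). -/
noncomputable def fragIdx [TopologicalSpace X] [PseudoEMetricSpace E] (f : X → E) : ℝ≥0∞ :=
  sInf {ε | 0 < ε ∧ EpsFragOn f Set.univ ε}

/-- A set `H` is resolvable: every nonempty `A ⊆ X` has a relatively open nonempty piece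
entirely inside `H` or entirely inside its complement. -/
def Resolvable [TopologicalSpace X] (H : Set X) : Prop :=
  ∀ A : Set X, A.Nonempty → ∃ U : Set X, IsOpen U ∧ (U ∩ A).Nonempty ∧
    (U ∩ A ⊆ H ∨ U ∩ A ⊆ Hᶜ)

/-- The σ-fragmentability index by resolvable sets. -/
noncomputable def sfragIdx [TopologicalSpace X] [PseudoEMetricSpace E] (f : X → E) : ℝ≥0∞ :=
  sInf {ε | 0 < ε ∧ ∃ H : ℕ → Set X, (∀ n, Resolvable (H n)) ∧ (⋃ n, H n) = Set.univ ∧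
    ∀ n, EpsFragOn f (H n) ε}

/-- `g` is constant on each set of some resolvable partition of `X`, i.e. on each difference
`U (γ+1) \ U γ` of an increasing transfinite sequence of open sets from `∅` to `X`,
continuous at limit ordinals. -/
def ConstOnResolvablePartition [TopologicalSpace X] (g : X → E) : Prop :=
  ∃ (κ : Ordinal.{u}) (U : Ordinal.{u} → Set X),
    (∀ α, IsOpen (U α)) ∧ (∀ α β : Ordinal, α ≤ β → U α ⊆ U β) ∧
    U 0 = ∅ ∧ U κ = Set.univ ∧
    (∀ γ, γ ≤ κ → Order.IsSuccLimit γ → U γ = ⋃ α < γ, U α) ∧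
    (∀ γ < κ, ∀ x ∈ U (γ + 1) \ U γ, ∀ y ∈ U (γ + 1) \ U γ, g x = g y)

/-- The transfinite derivation of open sets in the definition of the oscillation rank
`β(f, ε)`:  `U 0 = ∅`, `U (α+1) = U α ∪ {x ∉ U α : ∃ open V ∋ x, diam f (V \ U α) < ε}`,
and unions at limit ordinals. -/
noncomputable def oscSet [TopologicalSpace X] [PseudoEMetricSpace E] (f : X → E)
    (ε : ℝ≥0∞) (o : Ordinal.{u}) : Set X :=
  Ordinal.limitRecOn o ∅
    (fun _ U => U ∪ {x | x ∉ U ∧ ∃ V : Set X, IsOpen V ∧ x ∈ V ∧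
      EMetric.diam (f '' (V \ U)) < ε})
    (fun γ _ ih => ⋃ (β : Ordinal) (h : β < γ), ih β h)

/-- `f` has countable oscillation rank: `β(f) < ω₁`, i.e. for every `ε > 0` the derivation
reaches `X` at some countable ordinal. -/
def CountableOscRank [TopologicalSpace X] [PseudoEMetricSpace E] (f : X → E) : Prop :=
  ∀ ε : ℝ≥0∞, 0 < ε → ∃ α < ω₁, oscSet f ε α = Set.univ

/-- A transfinite sequence `(V α)_{α ≤ κ}` of open sets has property `*(f, ε)`. -/
def StarProp [TopologicalSpace X] [PseudoEMetricSpace E] (f : X → E) (ε : ℝ≥0∞)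
    (κ : Ordinal.{u}) (V : Ordinal.{u} → Set X) : Prop :=
  (∀ α, α ≤ κ → IsOpen (V α)) ∧ (∀ α β : Ordinal, α ≤ β → β ≤ κ → V α ⊆ V β) ∧
  V 0 = ∅ ∧ V κ = Set.univ ∧
  (∀ γ, γ ≤ κ → Order.IsSuccLimit γ → V γ = ⋃ α < γ, V α) ∧
  (∀ α < κ, ∀ x ∈ V (α + 1) \ V α, ∃ W : Set X, IsOpen W ∧ x ∈ W ∧
    EMetric.diam (f '' (W \ V α)) < ε)

/-- Uniform distance `d(f, g) = sup_x ρ(f x, g x)` (in `[0, ∞]`). -/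
noncomputable def unifDist [PseudoEMetricSpace E] (f g : X → E) : ℝ≥0∞ :=
  ⨆ x, edist (f x) (g x)

/-- Distance from `f` to the family of σ-fragmented mappings. -/
noncomputable def distToSFrag [TopologicalSpace X] [PseudoEMetricSpace E] (f : X → E) : ℝ≥0∞ :=
  ⨅ (g : {g : X → E // sfragIdx g = 0}), unifDist f g.1

end Defs


lemma aux_one_div_den_le_abs {q : ℚ} (hq : q ≠ 0) : 1 / (q.den : ℚ) ≤ |q| := by
  rw [div_le_iff₀ (by positivity)]
  calc (1:ℚ) ≤ |(q.num : ℚ)| := by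
        have h := Int.one_le_abs (Rat.num_ne_zero.mpr hq)
        exact_mod_cast h
    _ = |q| * q.den := by
        rw [← Rat.mul_den_eq_num, abs_mul, abs_of_pos (show (0:ℚ) < (q.den:ℚ) by positivity)]

lemma aux_den_sep {x y : ℚ} (h : x ≠ y) :
    1 / ((x.den : ℚ) * y.den) ≤ |x - y| := by
  have hq : x - y ≠ 0 := sub_ne_zero.mpr h
  have hdvd : (x - y).den ∣ x.den * y.den := by
    have := Rat.add_den_dvd x (-y)
    simpa [sub_eq_add_neg, Rat.neg_den] using this
  have hle : (x - y).den ≤ x.den * y.den :=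
    Nat.le_of_dvd (by positivity) hdvd
  calc (1:ℚ) / ((x.den : ℚ) * y.den) ≤ 1 / ((x - y).den : ℚ) := by
        apply one_div_le_one_div_of_le (by positivity)
        exact_mod_cast hle
    _ ≤ |x - y| := aux_one_div_den_le_abs hq

lemma aux_exists_large_den (x : ℚ) (N : ℕ) {δ : ℚ} (hδ : 0 < δ) :
    ∃ y : ℚ, x < y ∧ y - x < δ ∧ N ≤ y.den := by
  obtain ⟨p, hpge, hp⟩ := Nat.exists_infinite_primes (max (max N (x.den + 1)) (⌈δ⁻¹⌉₊ + 1))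
  have hpN : N ≤ p := le_trans ((le_max_left _ _).trans (le_max_left _ _)) hpge
  have hpd : x.den < p := lt_of_lt_of_le (Nat.lt_succ_self _)
    (((le_max_right _ _).trans (le_max_left _ _)).trans hpge)
  have hpc : (⌈δ⁻¹⌉₊ : ℚ) + 1 ≤ p := by exact_mod_cast (le_max_right _ _).trans hpge
  have hp0 : (0:ℚ) < p := by exact_mod_cast hp.pos
  set y := x + (p:ℚ)⁻¹ with hy
  have hyx : y - x = (p:ℚ)⁻¹ := by ring
  have hinv : ((p:ℚ)⁻¹).den = p := by
    rw [Rat.inv_natCast_den]; simp [hp.pos.ne']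
  refine ⟨y, by simp [hy, inv_pos.mpr hp0], ?_, ?_⟩
  · rw [hyx]
    have h1 : δ⁻¹ < (p:ℚ) := by have := Nat.le_ceil δ⁻¹; linarith
    have := inv_strictAnti₀ (by positivity) h1
    rwa [inv_inv] at this
  · have hdvd : ((p:ℚ)⁻¹).den ∣ y.den * x.den := by
      have h2 : y + -x = (p:ℚ)⁻¹ := by rw [hy]; ring
      have := Rat.add_den_dvd y (-x)
      rwa [h2, Rat.neg_den] at this
    rw [hinv] at hdvd
    rcases (Nat.Prime.dvd_mul hp).mp hdvd with h | h
    · exact hpN.trans (Nat.le_of_dvd y.den_pos h)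
    · exact absurd (Nat.le_of_dvd x.den_pos h) (not_le.mpr hpd)

section OscSetLemmas

variable {X : Type u} {E : Type v} [TopologicalSpace X] [PseudoEMetricSpace E]

lemma oscSet_zero (f : X → E) (ε : ℝ≥0∞) : oscSet f ε 0 = ∅ :=
  Ordinal.limitRecOn_zero _ _ _

lemma oscSet_succ (f : X → E) (ε : ℝ≥0∞) (o : Ordinal.{u}) :
    oscSet f ε (o + 1) = oscSet f ε o ∪ {x | x ∉ oscSet f ε o ∧ ∃ V : Set X, IsOpen V ∧
      x ∈ V ∧ EMetric.diam (f '' (V \ oscSet f ε o)) < ε} := by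
  unfold oscSet
  rw [Ordinal.add_one_eq_succ, Ordinal.limitRecOn_succ]

end OscSetLemmas

section Main

local notation "X'" => {q : ℚ // 0 < q}

noncomputable abbrev fQ : X' → ℝ := fun x => 1 / (x.1.den : ℝ)

lemma claim1 {ε : ℝ≥0∞} {x : X'} (h : ENNReal.ofReal (1 / (x.1.den : ℝ)) < ε) :
    ∃ V : Set X', IsOpen V ∧ x ∈ V ∧ EMetric.diam (fQ '' V) < ε := by
  set b := x.1.den with hb
  have hbp : 0 < b := x.1.den_pos
  have hbpR : (0:ℝ) < (b:ℝ) := by exact_mod_cast hbp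
  refine ⟨Metric.ball x ((1:ℝ)/(b*b)), Metric.isOpen_ball,
    Metric.mem_ball_self (by positivity), ?_⟩
  refine lt_of_le_of_lt ?_ h
  have key : ∀ w : X', w ∈ Metric.ball x ((1:ℝ)/(b*b)) → b ≤ w.1.den := by
    intro w hw
    by_contra hlt
    push_neg at hlt
    have hne : w.1 ≠ x.1 := by
      intro he
      rw [he] at hlt
      exact lt_irrefl _ hlt
    have hsep := aux_den_sep hne
    have hd : dist w x < 1/((b:ℝ)*b) := Metric.mem_ball.mp hw
    rw [Subtype.dist_eq, Rat.dist_eq] at hd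
    have hsepR : 1/((w.1.den:ℝ) * x.1.den) ≤ |(w.1:ℝ) - (x.1:ℝ)| := by
      have := (Rat.cast_le (K := ℝ)).mpr hsep
      push_cast at this
      convert this using 2
    have hwdR : (w.1.den:ℝ) ≤ (b:ℝ) := by exact_mod_cast hlt.le
    have hwd0 : (0:ℝ) < (w.1.den:ℝ) := by exact_mod_cast w.1.den_pos
    have h2 : (1:ℝ)/((b:ℝ)*b) ≤ 1/((w.1.den:ℝ) * x.1.den) := by
      apply one_div_le_one_div_of_le (by positivity)
      rw [← hb]
      exact mul_le_mul_of_nonneg_right hwdR hbpR.le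
    rw [← hb] at hsepR
    linarith
  apply EMetric.diam_le
  rintro u ⟨y, hy, rfl⟩ v ⟨z, hz, rfl⟩
  rw [edist_dist, Real.dist_eq]
  apply ENNReal.ofReal_le_ofReal
  have hy' := key y hy
  have hz' := key z hz
  have hy0 : (0:ℝ) < (y.1.den:ℝ) := by exact_mod_cast y.1.den_pos
  have hz0 : (0:ℝ) < (z.1.den:ℝ) := by exact_mod_cast z.1.den_pos
  have hy1 : 1/(y.1.den:ℝ) ≤ 1/(b:ℝ) := by
    apply one_div_le_one_div_of_le hbpR
    exact_mod_cast hy'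
  have hz1 : 1/(z.1.den:ℝ) ≤ 1/(b:ℝ) := by
    apply one_div_le_one_div_of_le hbpR
    exact_mod_cast hz'
  have hy2 : 0 < 1/(y.1.den:ℝ) := by positivity
  have hz2 : 0 < 1/(z.1.den:ℝ) := by positivity
  rw [abs_le]
  constructor <;> simp only [fQ] <;> linarith

lemma mem_U1 {ε : ℝ≥0∞} {x : X'} (h : ENNReal.ofReal (1 / (x.1.den : ℝ)) < ε) :
    x ∈ oscSet fQ ε 1 := by
  obtain ⟨V, hVo, hxV, hd⟩ := claim1 h
  rw [show (1 : Ordinal) = 0 + 1 by rw [zero_add], oscSet_succ, oscSet_zero]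
  exact Or.inr ⟨notMem_empty x, V, hVo, hxV, by rwa [diff_empty]⟩

lemma osc_two {ε : ℝ≥0∞} (hε : 0 < ε) : oscSet fQ ε 2 = Set.univ := by
  rw [eq_univ_iff_forall]
  intro x
  rw [show (2 : Ordinal) = 1 + 1 by rw [one_add_one_eq_two], oscSet_succ]
  by_cases hx : x ∈ oscSet fQ ε 1
  · exact Or.inl hx
  set b := x.1.den with hb
  have hbp : 0 < b := x.1.den_pos
  have hbpR : (0:ℝ) < (b:ℝ) := by exact_mod_cast hbp
  have hbε : ε ≤ ENNReal.ofReal (1/(b:ℝ)) := by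
    by_contra hc
    push_neg at hc
    exact hx (mem_U1 hc)
  have hεtop : ε ≠ ⊤ := (lt_of_le_of_lt hbε ENNReal.ofReal_lt_top).ne
  set e := ε.toReal with he
  have he0 : 0 < e := ENNReal.toReal_pos hε.ne' hεtop
  set M : ℕ := max b ⌈1/e⌉₊ with hM
  have hMb : b ≤ M := le_max_left _ _
  have hM0 : (0:ℝ) < (M:ℝ) := by
    have : 0 < M := lt_of_lt_of_le hbp hMb
    exact_mod_cast this
  refine Or.inr ⟨hx, Metric.ball x ((1:ℝ)/(b*M)), Metric.isOpen_ball,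
    Metric.mem_ball_self (by positivity), ?_⟩
  have hsub : Metric.ball x ((1:ℝ)/(b*M)) \ oscSet fQ ε 1 ⊆ {x} := by
    rintro y ⟨hyb, hyU⟩
    have hden : ¬ ENNReal.ofReal (1 / (y.1.den : ℝ)) < ε := fun hc => hyU (mem_U1 hc)
    push_neg at hden
    have hy0 : (0:ℝ) < (y.1.den:ℝ) := by exact_mod_cast y.1.den_pos
    have hety : e ≤ 1/(y.1.den:ℝ) := by
      have := ENNReal.toReal_mono ENNReal.ofReal_ne_top hden
      rwa [ENNReal.toReal_ofReal (by positivity)] at this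
    have hyM : (y.1.den:ℝ) ≤ (M:ℝ) := by
      have h1 : (y.1.den:ℝ) ≤ 1/e := by
        have := one_div_le_one_div_of_le he0 hety
        rwa [one_div_one_div] at this
      have h2 : (1:ℝ)/e ≤ (⌈1/e⌉₊:ℝ) := Nat.le_ceil _
      have h3 : ((⌈1/e⌉₊:ℕ):ℝ) ≤ (M:ℝ) := by exact_mod_cast le_max_right b ⌈1/e⌉₊
      linarith
    by_contra hne
    have hne' : y.1 ≠ x.1 := fun he' => hne (Subtype.ext he')
    have hsep := aux_den_sep hne'
    have hd : dist y x < 1/((b:ℝ)*M) := Metric.mem_ball.mp hyb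
    rw [Subtype.dist_eq, Rat.dist_eq] at hd
    have hsepR : 1/((y.1.den:ℝ) * x.1.den) ≤ |(y.1:ℝ) - (x.1:ℝ)| := by
      have := (Rat.cast_le (K := ℝ)).mpr hsep
      push_cast at this
      convert this using 2
    have h4 : (1:ℝ)/((b:ℝ)*M) ≤ 1/((y.1.den:ℝ) * x.1.den) := by
      rw [← hb]
      apply one_div_le_one_div_of_le (by positivity)
      calc (y.1.den:ℝ) * b ≤ (M:ℝ) * b := mul_le_mul_of_nonneg_right hyM hbpR.le
        _ = (b:ℝ) * M := mul_comm _ _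
    linarith
  have : (fQ '' (Metric.ball x ((1:ℝ)/(b*M)) \ oscSet fQ ε 1)).Subsingleton :=
    (Set.Subsingleton.anti Set.subsingleton_singleton hsub).image _
  calc EMetric.diam _ = 0 := EMetric.diam_subsingleton this
    _ < ε := hε

end Main

/-- `f(p/q) = 1/q` on positive rationals has oscillation rank exactly `2`,
but its composition with the continuous map `h(x) = 1/x` is not fragmented. -/
theorem stmt_13 :
    ContinuousOn (fun y : ℝ => 1 / y) {y : ℝ | 0 < y} ∧
    (∀ ε : ℝ≥0∞, 0 < ε → ∃ α ≤ (2 : Ordinal),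
      oscSet (fun x : {q : ℚ // 0 < q} => 1 / (x.1.den : ℝ)) ε α = Set.univ) ∧
    (∃ ε : ℝ≥0∞, 0 < ε ∧ ∀ α < (2 : Ordinal),
      oscSet (fun x : {q : ℚ // 0 < q} => 1 / (x.1.den : ℝ)) ε α ≠ Set.univ) ∧
    ¬ fragIdx ((fun y : ℝ => 1 / y) ∘ (fun x : {q : ℚ // 0 < q} => 1 / (x.1.den : ℝ))) = 0 := by
  refine ⟨?_, ?_, ?_, ?_⟩
  · exact ContinuousOn.div continuousOn_const continuousOn_id (fun y hy => ne_of_gt hy)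
  · intro ε hε
    exact ⟨2, le_refl 2, osc_two hε⟩
  · refine ⟨1/2, by norm_num, ?_⟩
    intro α hα
    have hα' : α = 0 ∨ α = 1 := by
      rw [show (2:Ordinal) = 1 + 1 by rw [one_add_one_eq_two], Ordinal.add_one_eq_succ,
        Order.lt_succ_iff] at hα
      exact Ordinal.le_one_iff.mp hα
    rcases hα' with rfl | rfl
    · rw [oscSet_zero]
      intro h
      exact (notMem_empty (⟨1, one_pos⟩ : {q : ℚ // 0 < q})) (h ▸ mem_univ _)
    · intro h
      have hx : (⟨1, one_pos⟩ : {q : ℚ // 0 < q}) ∈ oscSet fQ (1/2) 1 := h ▸ mem_univ _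
      rw [show (1 : Ordinal) = 0 + 1 by rw [zero_add], oscSet_succ, oscSet_zero] at hx
      rcases hx with hx | ⟨-, V, hVo, hxV, hd⟩
      · exact notMem_empty _ hx
      rw [diff_empty] at hd
      obtain ⟨r, hr, hball⟩ := Metric.isOpen_iff.mp hVo _ hxV
      obtain ⟨δ, hδ0, hδr⟩ := exists_rat_btwn hr
      have hδ0' : (0:ℚ) < δ := by exact_mod_cast hδ0
      obtain ⟨y₀, hy1, hy2, hy3⟩ := aux_exists_large_den 1 3 hδ0'
      have hy0 : (0:ℚ) < y₀ := lt_trans one_pos hy1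
      have hy1R : (1:ℝ) < (y₀:ℝ) := by exact_mod_cast hy1
      have hy2R : (y₀:ℝ) - 1 < (δ:ℝ) := by exact_mod_cast hy2
      have hyV : (⟨y₀, hy0⟩ : {q : ℚ // 0 < q}) ∈ V := by
        apply hball
        rw [Metric.mem_ball, Subtype.dist_eq, Rat.dist_eq]
        push_cast
        rw [abs_of_pos (by linarith)]
        linarith
      have hed : edist (fQ (⟨y₀, hy0⟩ : {q : ℚ // 0 < q})) (fQ (⟨1, one_pos⟩ : {q : ℚ // 0 < q})) < 1/2 :=
        lt_of_le_of_lt (EMetric.edist_le_diam_of_mem (s := fQ '' V)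
          (mem_image_of_mem _ hyV) (mem_image_of_mem _ hxV)) hd
      have hden1 : ((1:ℚ).den : ℝ) = 1 := by norm_num
      have h13 : 1/((y₀.den:ℝ)) ≤ 1/3 := by
        apply one_div_le_one_div_of_le (by norm_num)
        exact_mod_cast hy3
      have h0 : (0:ℝ) < 1/(y₀.den:ℝ) := by
        have : (0:ℝ) < (y₀.den:ℝ) := by exact_mod_cast y₀.den_pos
        positivity
      rw [edist_dist, Real.dist_eq] at hed
      simp only [fQ, hden1] at hed
      have habs : (2/3:ℝ) ≤ |1/(y₀.den:ℝ) - 1/1| := by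
        rw [abs_of_nonpos (by linarith)]
        linarith
      have hlt : ENNReal.ofReal (2/3) < 1/2 :=
        lt_of_le_of_lt (ENNReal.ofReal_le_ofReal habs) hed
      have hhalf : ((1:ℝ≥0∞)/2) ≠ ⊤ := by
        rw [one_div]
        exact ENNReal.inv_ne_top.mpr (by norm_num)
      have := (ENNReal.toReal_lt_toReal ENNReal.ofReal_ne_top hhalf).mpr hlt
      rw [ENNReal.toReal_ofReal (by norm_num), one_div, ENNReal.toReal_inv] at this
      norm_num at this
  · intro hfrag
    have hle : (1:ℝ≥0∞) ≤ fragIdx ((fun y : ℝ => 1 / y) ∘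
        (fun x : {q : ℚ // 0 < q} => 1 / (x.1.den : ℝ))) := by
      apply le_sInf
      rintro ε ⟨hε0, hε⟩
      obtain ⟨V, hVo, ⟨x, hxV⟩, hd⟩ := hε Set.univ (subset_refl _) ⟨⟨1, one_pos⟩, mem_univ _⟩
      have hxV' : x ∈ V := hxV.1
      obtain ⟨r, hr, hball⟩ := Metric.isOpen_iff.mp hVo _ hxV'
      obtain ⟨δ, hδ0, hδr⟩ := exists_rat_btwn hr
      have hδ0' : (0:ℚ) < δ := by exact_mod_cast hδ0
      obtain ⟨y₀, hy1, hy2, hy3⟩ := aux_exists_large_den x.1 (x.1.den + 1) hδ0'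
      have hy0 : (0:ℚ) < y₀ := lt_trans x.2 hy1
      have hy1R : ((x.1:ℚ):ℝ) < (y₀:ℝ) := by exact_mod_cast hy1
      have hy2R : (y₀:ℝ) - ((x.1:ℚ):ℝ) < (δ:ℝ) := by exact_mod_cast hy2
      have hyV : (⟨y₀, hy0⟩ : {q : ℚ // 0 < q}) ∈ V := by
        apply hball
        rw [Metric.mem_ball, Subtype.dist_eq, Rat.dist_eq]
        rw [abs_of_pos (by linarith)]
        linarith
      set g := ((fun y : ℝ => 1 / y) ∘
        (fun x : {q : ℚ // 0 < q} => 1 / (x.1.den : ℝ))) with hg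
      have hed : edist (g ⟨y₀, hy0⟩) (g x) ≤ ε :=
        le_trans (EMetric.edist_le_diam_of_mem (s := g '' (V ∩ Set.univ))
          (mem_image_of_mem _ ⟨hyV, mem_univ _⟩) (mem_image_of_mem _ ⟨hxV', mem_univ _⟩)) hd
      refine le_trans ?_ hed
      have hcast : ((x.1.den:ℝ)) + 1 ≤ (y₀.den:ℝ) := by exact_mod_cast hy3
      rw [hg, edist_dist, Real.dist_eq]
      simp only [Function.comp_apply, one_div_one_div]
      rw [← ENNReal.ofReal_one]
      apply ENNReal.ofReal_le_ofReal
      rw [abs_of_nonneg (by linarith)]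
      linarith
    rw [hfrag] at hle
    simp at hle
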